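/- Let N = (V, E, c) be a nesting balanced network with boundary vertices ∂V ⊆ V, and let I, J ⊆ ∂V be disjoint. Then the cycle-flow entropy satisfies subadditivity: S(I) + S(J) ≥ S(I ∪ J). -/

import Mathlib

open scoped Classical

/-- An edge cycle: a nonempty cyclically ordered sequence of distinct directed
edges (each a source-target pair) with the target of each edge equal to the
source of the next (cyclically). -/
structure EdgeCycle (V : Type*) where
  n : ℕ
  npos : 0 < n
  edge : Fin n → V × V
  inj : Function.Injective edge
  chain : ∀ i : Fin n, (edge i).2 = (edge ⟨(i.val + 1) % n, Nat.mod_lt _ npos⟩).1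

/-- Membership of a directed edge in an edge cycle. -/
def EdgeCycle.Mem {V : Type*} (C : EdgeCycle V) (e : V × V) : Prop :=
  ∃ i, C.edge i = e

/-- The cycle visits a vertex of `S`: some edge of the cycle has its target in `S`. -/
def EdgeCycle.Visits {V : Type*} (C : EdgeCycle V) (S : Finset V) : Prop :=
  ∃ i, (C.edge i).2 ∈ S

/-- A simple cycle flow: an edge cycle together with a nonnegative flux. -/
structure CycleFlow (V : Type*) where
  cyc : EdgeCycle V
  flux : ℝ
  flux_nonneg : 0 ≤ flux

/-- The total load that a finite family of simple cycle flows places on the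
directed edge `(u, v)`. -/
noncomputable def edgeLoad {V : Type*} (F : List (CycleFlow V)) (u v : V) : ℝ :=
  (F.map (fun C => if C.cyc.Mem (u, v) then C.flux else 0)).sum

/-- A finite family of simple cycle flows is a multi-cycle flow on the network
with capacity function `c` if on every edge the total load is at most the capacity. -/
def Feasible {V : Type*} (c : V → V → ℝ) (F : List (CycleFlow V)) : Prop :=
  ∀ u v, edgeLoad F u v ≤ c u v

/-- The flux of a multi-cycle flow between two (disjoint) vertex sets `I` and `J`:
the sum of the fluxes of those simple cycle flows visiting both a vertex of `I`
and a vertex of `J`. -/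
noncomputable def mflux {V : Type*} (F : List (CycleFlow V)) (I J : Finset V) : ℝ :=
  (F.map (fun C => if C.cyc.Visits I ∧ C.cyc.Visits J then C.flux else 0)).sum

/-- The cycle-flow entropy of a subset `I` of the boundary vertices `bdry`:
the maximal flux between `I` and its boundary complement over all
multi-cycle flows. -/
noncomputable def entropy {V : Type*} (c : V → V → ℝ) (bdry I : Finset V) : ℝ :=
  sSup { x | ∃ F : List (CycleFlow V), Feasible c F ∧ mflux F I (bdry \ I) = x }

/-- A network is balanced if at every vertex the total capacity of ingoing edges
equals the total capacity of outgoing edges. -/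
def BalancedNet {V : Type*} [Fintype V] (c : V → V → ℝ) : Prop :=
  ∀ v : V, (∑ u, c u v) = ∑ u, c v u

/-- The residual capacity function of a network `c` with respect to a
multi-cycle flow `F`. -/
noncomputable def resid {V : Type*} (c : V → V → ℝ) (F : List (CycleFlow V)) : V → V → ℝ :=
  fun u v => c u v - edgeLoad F u v

/-- `F'` is a multi-cycle subflow of `F`: same edge cycles, smaller fluxes. -/
def Subflow {V : Type*} (F' F : List (CycleFlow V)) : Prop :=
  List.Forall₂ (fun C' C => C'.cyc = C.cyc ∧ C'.flux ≤ C.flux) F' F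

/-- The nesting property: for every pair of disjoint boundary subsets `I`, `J`
there is a single multi-cycle flow simultaneously maximizing the flux through
`I` and through `I ∪ J`. -/
def Nesting {V : Type*} (c : V → V → ℝ) (bdry : Finset V) : Prop :=
  ∀ I J : Finset V, I ⊆ bdry → J ⊆ bdry → Disjoint I J →
    ∃ F : List (CycleFlow V), Feasible c F ∧
      mflux F I (bdry \ I) = entropy c bdry I ∧
      mflux F (I ∪ J) (bdry \ (I ∪ J)) = entropy c bdry (I ∪ J)

lemma EdgeCycle.Visits.mono {V : Type*} {C : EdgeCycle V} {S T : Finset V}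
    (hST : S ⊆ T) (h : C.Visits S) : C.Visits T := by
  obtain ⟨i, hi⟩ := h; exact ⟨i, hST hi⟩

lemma mflux_cons {V : Type*} (C : CycleFlow V) (F : List (CycleFlow V)) (I J : Finset V) :
    mflux (C :: F) I J =
      (if C.cyc.Visits I ∧ C.cyc.Visits J then C.flux else 0) + mflux F I J := by
  simp [mflux]

lemma mflux_nonneg {V : Type*} (F : List (CycleFlow V)) (I J : Finset V) :
    0 ≤ mflux F I J := by
  apply List.sum_nonneg
  intro x hx
  simp only [List.mem_map] at hx
  obtain ⟨C, _, rfl⟩ := hx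
  split <;> simp [C.flux_nonneg]

lemma mflux_union_le {V : Type*} [DecidableEq V] (F : List (CycleFlow V))
    (I J bdry : Finset V) :
    mflux F (I ∪ J) (bdry \ (I ∪ J)) ≤ mflux F I (bdry \ I) + mflux F J (bdry \ J) := by
  induction F with
  | nil => simp [mflux]
  | cons C F ih =>
    rw [mflux_cons, mflux_cons, mflux_cons]
    have key : (if C.cyc.Visits (I ∪ J) ∧ C.cyc.Visits (bdry \ (I ∪ J)) then C.flux else 0)
        ≤ (if C.cyc.Visits I ∧ C.cyc.Visits (bdry \ I) then C.flux else 0)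
          + (if C.cyc.Visits J ∧ C.cyc.Visits (bdry \ J) then C.flux else 0) := by
      by_cases h : C.cyc.Visits (I ∪ J) ∧ C.cyc.Visits (bdry \ (I ∪ J))
      · obtain ⟨⟨i, hi⟩, hcomp⟩ := h
        rw [if_pos ⟨⟨i, hi⟩, hcomp⟩]
        rw [Finset.mem_union] at hi
        rcases hi with hiI | hiJ
        · have h1 : C.cyc.Visits I ∧ C.cyc.Visits (bdry \ I) :=
            ⟨⟨i, hiI⟩, hcomp.mono (Finset.sdiff_subset_sdiff le_rfl Finset.subset_union_left)⟩
          rw [if_pos h1]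
          have : 0 ≤ (if C.cyc.Visits J ∧ C.cyc.Visits (bdry \ J) then C.flux else 0) := by
            split <;> simp [C.flux_nonneg]
          linarith
        · have h2 : C.cyc.Visits J ∧ C.cyc.Visits (bdry \ J) :=
            ⟨⟨i, hiJ⟩, hcomp.mono (Finset.sdiff_subset_sdiff le_rfl Finset.subset_union_right)⟩
          rw [if_pos h2]
          have : 0 ≤ (if C.cyc.Visits I ∧ C.cyc.Visits (bdry \ I) then C.flux else 0) := by
            split <;> simp [C.flux_nonneg]
          linarith
      · rw [if_neg h]
        have h1 : 0 ≤ (if C.cyc.Visits I ∧ C.cyc.Visits (bdry \ I) then C.flux else 0) := by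
          split <;> simp [C.flux_nonneg]
        have h2 : 0 ≤ (if C.cyc.Visits J ∧ C.cyc.Visits (bdry \ J) then C.flux else 0) := by
          split <;> simp [C.flux_nonneg]
        linarith
    linarith

lemma edgeLoad_cons {V : Type*} (C : CycleFlow V) (F : List (CycleFlow V)) (u v : V) :
    edgeLoad (C :: F) u v =
      (if C.cyc.Mem (u, v) then C.flux else 0) + edgeLoad F u v := by
  simp [edgeLoad]

lemma mflux_le_total {V : Type*} [Fintype V] (F : List (CycleFlow V)) (I J : Finset V) :
    mflux F I J ≤ ∑ p : V × V, edgeLoad F p.1 p.2 := by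
  induction F with
  | nil => simp [mflux, edgeLoad]
  | cons C F ih =>
    rw [mflux_cons]
    have hsum : ∑ p : V × V, edgeLoad (C :: F) p.1 p.2
        = (∑ p : V × V, (if C.cyc.Mem (p.1, p.2) then C.flux else 0))
          + ∑ p : V × V, edgeLoad F p.1 p.2 := by
      rw [← Finset.sum_add_distrib]
      exact Finset.sum_congr rfl fun p _ => edgeLoad_cons C F p.1 p.2
    rw [hsum]
    have hhead : (if C.cyc.Visits I ∧ C.cyc.Visits J then C.flux else 0)
        ≤ ∑ p : V × V, (if C.cyc.Mem (p.1, p.2) then C.flux else 0) := by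
      set e0 : V × V := C.cyc.edge ⟨0, C.cyc.npos⟩ with he0
      have hmem : C.cyc.Mem (e0.1, e0.2) := ⟨⟨0, C.cyc.npos⟩, by simp [he0]⟩
      calc (if C.cyc.Visits I ∧ C.cyc.Visits J then C.flux else 0)
          ≤ (if C.cyc.Mem (e0.1, e0.2) then C.flux else 0) := by
            rw [if_pos hmem]; split <;> simp [C.flux_nonneg]
        _ ≤ ∑ p : V × V, (if C.cyc.Mem (p.1, p.2) then C.flux else 0) :=
            Finset.single_le_sum
              (f := fun p : V × V => if C.cyc.Mem (p.1, p.2) then C.flux else 0)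
              (fun p _ => by by_cases h : C.cyc.Mem (p.1, p.2) <;> simp [h, C.flux_nonneg])
              (Finset.mem_univ e0)
    linarith

lemma entropy_bddAbove {V : Type*} [Fintype V] (c : V → V → ℝ) (bdry I : Finset V) :
    BddAbove { x | ∃ F : List (CycleFlow V), Feasible c F ∧ mflux F I (bdry \ I) = x } := by
  refine ⟨∑ p : V × V, c p.1 p.2, ?_⟩
  rintro x ⟨F, hF, rfl⟩
  calc mflux F I (bdry \ I) ≤ ∑ p : V × V, edgeLoad F p.1 p.2 := mflux_le_total F _ _
    _ ≤ ∑ p : V × V, c p.1 p.2 := Finset.sum_le_sum fun p _ => hF p.1 p.2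

/-- Subadditivity of the cycle-flow entropy on a nesting balanced network. -/
theorem stmt6 {V : Type*} [Fintype V] [DecidableEq V] (c : V → V → ℝ)
    (hc : ∀ u v, 0 ≤ c u v) (bdry : Finset V) (hbal : BalancedNet c)
    (hnest : Nesting c bdry) (I J : Finset V) (hI : I ⊆ bdry) (hJ : J ⊆ bdry)
    (hIJ : Disjoint I J) :
    entropy c bdry (I ∪ J) ≤ entropy c bdry I + entropy c bdry J := by
  obtain ⟨F, hF, hFI, hFIJ⟩ := hnest I J hI hJ hIJ
  have hu : mflux F (I ∪ J) (bdry \ (I ∪ J)) = entropy c bdry (I ∪ J) := by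
    convert hFIJ using 2 <;> (ext x; simp)
  have hi : mflux F I (bdry \ I) = entropy c bdry I := by
    convert hFI using 2 <;> (ext x; simp)
  rw [← hu, ← hi]
  have hJle : mflux F J (bdry \ J) ≤ entropy c bdry J := by
    refine le_csSup (entropy_bddAbove c bdry J) ⟨F, hF, ?_⟩
    congr 1 <;> (ext x; simp)
  have := mflux_union_le F I J bdry
  linarith
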